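/- In the HRRU model, the empirical mean M_n = (1/n) ∑_{j=1}^n X_j/N_j converges almost surely and in L¹ to the same random variable Z that is the almost sure limit of the proportions Z_n. -/

import Mathlib

open MeasureTheory ProbabilityTheory Filter
open scoped Topology

noncomputable section

/-- Total number of balls at time `n` in the HRRU model with initial composition
`a + b` and draws/reinforcements `N`, `R` (time is indexed from `1`). -/
def hrruS {Ω : Type*} (a b : ℕ) (N R : ℕ → Ω → ℕ) (n : ℕ) (ω : Ω) : ℕ :=
  a + b + ∑ j ∈ Finset.Icc 1 n, N j ω * R j ω

/-- Number of balls of color A at time `n` in the HRRU model. -/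
def hrruHa {Ω : Type*} (a : ℕ) (X R : ℕ → Ω → ℕ) (n : ℕ) (ω : Ω) : ℕ :=
  a + ∑ j ∈ Finset.Icc 1 n, X j ω * R j ω

/-- Proportion of balls of color A at time `n` in the HRRU model. -/
def hrruZ {Ω : Type*} (a b : ℕ) (N X R : ℕ → Ω → ℕ) (n : ℕ) (ω : Ω) : ℝ :=
  (hrruHa a X R n ω : ℝ) / (hrruS a b N R n ω : ℝ)

/-- The hypergeometric probability mass function with parameters `Np, S, H`:
`P(X = k) = C(H,k) C(S-H, Np-k) / C(S,Np)`. -/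
def hypergeomPMF (Np S H k : ℕ) : ℝ :=
  ((H.choose k : ℝ) * ((S - H).choose (Np - k) : ℝ)) / (S.choose Np : ℝ)

/-- The natural filtration `ℱ n = σ(N₁,X₁,R₁,…,N_n,X_n,R_n)` of the HRRU model. -/
def hrruF {Ω : Type*} (N X R : ℕ → Ω → ℕ) (n : ℕ) : MeasurableSpace Ω :=
  ⨆ j ∈ Finset.Icc 1 n,
    (MeasurableSpace.comap (N j) ⊤ ⊔ MeasurableSpace.comap (X j) ⊤ ⊔
      MeasurableSpace.comap (R j) ⊤)

/-- The σ-field `𝒢 (n-1) = ℱ (n-1) ∨ σ(N n)` of the HRRU model. -/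
def hrruG {Ω : Type*} (N X R : ℕ → Ω → ℕ) (n : ℕ) : MeasurableSpace Ω :=
  hrruF N X R n ⊔ MeasurableSpace.comap (N (n + 1)) ⊤

/-- The σ-field `ℋ (n-1) = ℱ (n-1) ∨ σ(N n) ∨ σ(R n)` of the HRRU model. -/
def hrruHfilt {Ω : Type*} (N X R : ℕ → Ω → ℕ) (n : ℕ) : MeasurableSpace Ω :=
  hrruG N X R n ⊔ MeasurableSpace.comap (R (n + 1)) ⊤

/-- The HRRU (Hypergeometric Randomly Reinforced Urn) model: an urn starts with
`a ≥ 1` balls of color A and `b ≥ 1` balls of color B.  At each time `n ≥ 1`,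
`N n` balls are drawn without replacement, `X n` of them being of color A, and
the drawn balls are returned together with `R n * X n` balls of color A and
`R n * (N n - X n)` balls of color B. -/
structure IsHRRU {Ω : Type*} [m0 : MeasurableSpace Ω] (μ : Measure Ω)
    (a b : ℕ) (N X R : ℕ → Ω → ℕ) : Prop where
  ha : 1 ≤ a
  hb : 1 ≤ b
  measN : ∀ n, Measurable (N n)
  measX : ∀ n, Measurable (X n)
  measR : ∀ n, Measurable (R n)
  /-- (i): `N n` takes values in `{1, …, S (n-1)}`. -/
  rangeN : ∀ n, 1 ≤ n → ∀ ω, 1 ≤ N n ω ∧ N n ω ≤ hrruS a b N R (n - 1) ω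
  /-- `X n ≤ N n`: one cannot extract more A-balls than balls. -/
  rangeX : ∀ n, 1 ≤ n → ∀ ω, X n ω ≤ N n ω
  /-- `R n ∈ ℕ ∖ {0}`. -/
  rangeR : ∀ n, 1 ≤ n → ∀ ω, 1 ≤ R n ω
  /-- (ii): the conditional distribution of `X n` given
  `ℱ (n-1) ∨ σ(N n)` is hypergeometric with parameters `N n, S (n-1), H (n-1)`. -/
  hypergeom : ∀ n, 1 ≤ n → ∀ k : ℕ,
    (μ[fun ω => if X n ω = k then (1 : ℝ) else 0|hrruG N X R (n - 1)]) =ᵐ[μ]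
      fun ω => hypergeomPMF (N n ω) (hrruS a b N R (n - 1) ω) (hrruHa a X R (n - 1) ω) k
  /-- (iii): `R n` is independent of `(N₁,X₁,R₁,…,N_{n-1},X_{n-1},R_{n-1},N_n,X_n)`. -/
  indepR : ∀ n, 1 ≤ n →
    Indep (MeasurableSpace.comap (R n) ⊤)
      (hrruG N X R (n - 1) ⊔ MeasurableSpace.comap (X n) ⊤) μ

lemma hyp_nat (m S H : ℕ) (hm : 1 ≤ m) (hH : 1 ≤ H) (hHS : H ≤ S) :
    ∑ k ∈ Finset.range (m+1), k * (H.choose k * (S-H).choose (m-k)) = H * (S-1).choose (m-1) := by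
  obtain ⟨m', rfl⟩ := Nat.exists_eq_add_of_le hm
  rw [Finset.sum_range_succ']
  simp only [Nat.zero_mul, add_zero]
  have key : ∀ i, (i+1) * (H.choose (i+1) * (S-H).choose (1+m'-(i+1)))
      = H * ((H-1).choose i * (S-H).choose (m' - i)) := by
    intro i
    have h1 : (i+1) * H.choose (i+1) = H * (H-1).choose i := by
      have := Nat.add_one_mul_choose_eq (H-1) i
      rw [Nat.sub_add_cancel hH] at this
      rw [mul_comm]
      exact this.symm
    have h2 : 1 + m' - (i+1) = m' - i := by omega
    rw [h2, ← mul_assoc, h1, mul_assoc]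
  simp only [key, ← Finset.mul_sum]
  congr 1
  have hv := Nat.add_choose_eq (H-1) (S-H) m'
  rw [Finset.Nat.sum_antidiagonal_eq_sum_range_succ_mk] at hv
  have hS : H - 1 + (S - H) = S - 1 := by omega
  rw [hS] at hv
  simp only [add_comm 1 m', Nat.add_sub_cancel]
  exact hv.symm

lemma hyp_mean (m S H : ℕ) (hm : 1 ≤ m) (hmS : m ≤ S) (hHS : H ≤ S) :
    ∑ k ∈ Finset.range (m+1), (k:ℝ) * hypergeomPMF m S H k = m * H / S := by
  have hS : 0 < S := lt_of_lt_of_le hm hmS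
  have hc : 0 < S.choose m := Nat.choose_pos hmS
  rcases Nat.eq_zero_or_pos H with hH | hH
  · subst hH
    rw [Finset.sum_eq_single 0]
    · simp
    · intro k hk hk0
      simp [hypergeomPMF, Nat.choose_eq_zero_of_lt (Nat.pos_of_ne_zero hk0)]
    · simp
  have hnat := hyp_nat m S H hm hH hHS
  have hSc : S * (S-1).choose (m-1) = S.choose m * m := by
    have h := Nat.add_one_mul_choose_eq (S-1) (m-1)
    have e1 : S-1+1 = S := by omega
    have e2 : m-1+1 = m := by omega
    rw [e1, e2] at h
    exact h
  have cast1 : ∀ k ∈ Finset.range (m+1), (k:ℝ) * hypergeomPMF m S H k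
      = ((k * (H.choose k * (S-H).choose (m-k)) : ℕ) : ℝ) / (S.choose m : ℝ) := by
    intro k _
    simp only [hypergeomPMF]
    push_cast
    ring
  rw [Finset.sum_congr rfl cast1, ← Finset.sum_div, ← Nat.cast_sum, hnat]
  have hcast := congrArg (Nat.cast : ℕ → ℝ) hSc
  push_cast at hcast
  have hc0 : (S.choose m : ℝ) ≠ 0 := Nat.cast_ne_zero.2 hc.ne'
  have hS0 : (S : ℝ) ≠ 0 := Nat.cast_ne_zero.2 hS.ne'
  rw [div_eq_div_iff hc0 hS0]
  push_cast
  linear_combination (H:ℝ) * hcast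


set_option linter.unusedSectionVars false
section Meas
variable {Ω : Type*} [m0 : MeasurableSpace Ω] {N X R : ℕ → Ω → ℕ}

lemma comap_le_of_measurable {f : Ω → ℕ} (hf : Measurable f) :
    MeasurableSpace.comap f ⊤ ≤ m0 := by
  rintro s ⟨t, -, rfl⟩
  exact hf (by trivial)

lemma measurable_of_comap_le {m : MeasurableSpace Ω} {f : Ω → ℕ}
    (h : MeasurableSpace.comap f ⊤ ≤ m) : Measurable[m] f :=
  fun s _ => h _ ⟨s, trivial, rfl⟩

lemma hrruF_le (hN : ∀ n, Measurable (N n)) (hX : ∀ n, Measurable (X n))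
    (hR : ∀ n, Measurable (R n)) (n : ℕ) : hrruF N X R n ≤ m0 := by
  refine iSup_le fun j => iSup_le fun _ => ?_
  exact sup_le (sup_le (comap_le_of_measurable (hN j)) (comap_le_of_measurable (hX j)))
    (comap_le_of_measurable (hR j))

lemma sup_le_hrruF {j n : ℕ} (h1 : 1 ≤ j) (h2 : j ≤ n) :
    (MeasurableSpace.comap (N j) ⊤ ⊔ MeasurableSpace.comap (X j) ⊤ ⊔
      MeasurableSpace.comap (R j) ⊤) ≤ hrruF N X R n := by
  have hj : j ∈ Finset.Icc 1 n := Finset.mem_Icc.2 ⟨h1, h2⟩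
  exact le_iSup_of_le j (le_iSup_of_le hj le_rfl)

lemma hrruF_mono {m n : ℕ} (h : m ≤ n) : hrruF N X R m ≤ hrruF N X R n := by
  refine iSup_le fun j => iSup_le fun hj => ?_
  rw [Finset.mem_Icc] at hj
  exact sup_le_hrruF hj.1 (hj.2.trans h)

lemma comap_N_le_F {j n : ℕ} (h1 : 1 ≤ j) (h2 : j ≤ n) :
    MeasurableSpace.comap (N j) ⊤ ≤ hrruF N X R n :=
  le_trans (le_sup_left.trans le_sup_left) (sup_le_hrruF h1 h2)

lemma comap_X_le_F {j n : ℕ} (h1 : 1 ≤ j) (h2 : j ≤ n) :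
    MeasurableSpace.comap (X j) ⊤ ≤ hrruF N X R n :=
  le_trans (le_sup_right.trans le_sup_left) (sup_le_hrruF h1 h2)

lemma comap_R_le_F {j n : ℕ} (h1 : 1 ≤ j) (h2 : j ≤ n) :
    MeasurableSpace.comap (R j) ⊤ ≤ hrruF N X R n :=
  le_trans le_sup_right (sup_le_hrruF h1 h2)

lemma hrruG_le (hN : ∀ n, Measurable (N n)) (hX : ∀ n, Measurable (X n))
    (hR : ∀ n, Measurable (R n)) (n : ℕ) : hrruG N X R n ≤ m0 :=
  sup_le (hrruF_le hN hX hR n) (comap_le_of_measurable (hN (n + 1)))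

lemma hrruF_le_hrruG (n : ℕ) : hrruF N X R n ≤ hrruG N X R n := le_sup_left

/-- real-cast of S is measurable w.r.t. `hrruF n`. -/
lemma measurable_S_real (a b n : ℕ) :
    Measurable[hrruF N X R n] (fun ω => (hrruS a b N R n ω : ℝ)) := by
  have : (fun ω => (hrruS a b N R n ω : ℝ))
      = fun ω => (a + b : ℝ) + ∑ j ∈ Finset.Icc 1 n, (N j ω : ℝ) * (R j ω : ℝ) := by
    funext ω; simp only [hrruS]; push_cast; ring
  rw [this]
  refine Measurable.add (measurable_const) (Finset.measurable_sum _ fun j hj => ?_)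
  rw [Finset.mem_Icc] at hj
  exact ((measurable_from_top (f := (Nat.cast : ℕ → ℝ))).comp
    (measurable_of_comap_le (comap_N_le_F hj.1 hj.2))).mul
    ((measurable_from_top (f := (Nat.cast : ℕ → ℝ))).comp
    (measurable_of_comap_le (comap_R_le_F hj.1 hj.2)))

lemma measurable_H_real (a n : ℕ) :
    Measurable[hrruF N X R n] (fun ω => (hrruHa a X R n ω : ℝ)) := by
  have : (fun ω => (hrruHa a X R n ω : ℝ))
      = fun ω => (a : ℝ) + ∑ j ∈ Finset.Icc 1 n, (X j ω : ℝ) * (R j ω : ℝ) := by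
    funext ω; simp only [hrruHa]; push_cast; ring
  rw [this]
  refine Measurable.add (measurable_const) (Finset.measurable_sum _ fun j hj => ?_)
  rw [Finset.mem_Icc] at hj
  exact ((measurable_from_top (f := (Nat.cast : ℕ → ℝ))).comp
    (measurable_of_comap_le (comap_X_le_F hj.1 hj.2))).mul
    ((measurable_from_top (f := (Nat.cast : ℕ → ℝ))).comp
    (measurable_of_comap_le (comap_R_le_F hj.1 hj.2)))

lemma measurable_Z_F (a b n : ℕ) :
    Measurable[hrruF N X R n] (hrruZ a b N X R n) :=
  (measurable_H_real a n).div (measurable_S_real a b n)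

lemma measurable_ratio_F {j n : ℕ} (h1 : 1 ≤ j) (h2 : j ≤ n) :
    Measurable[hrruF N X R n] (fun ω => (X j ω : ℝ) / (N j ω : ℝ)) :=
  Measurable.div
    ((measurable_from_top (f := (Nat.cast : ℕ → ℝ))).comp
      (measurable_of_comap_le (comap_X_le_F h1 h2)))
    ((measurable_from_top (f := (Nat.cast : ℕ → ℝ))).comp
      (measurable_of_comap_le (comap_N_le_F h1 h2)))

end Meas


section Bounds
variable {Ω : Type*} {a b : ℕ} {N X R : ℕ → Ω → ℕ}

lemma hrruS_pos (ha : 1 ≤ a) (n : ℕ) (ω : Ω) : 1 ≤ hrruS a b N R n ω := by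
  unfold hrruS; omega

lemma hrruHa_le_hrruS (hX : ∀ j, 1 ≤ j → ∀ ω, X j ω ≤ N j ω) (n : ℕ) (ω : Ω) :
    hrruHa a X R n ω ≤ hrruS a b N R n ω := by
  unfold hrruHa hrruS
  have : ∑ j ∈ Finset.Icc 1 n, X j ω * R j ω ≤ ∑ j ∈ Finset.Icc 1 n, N j ω * R j ω :=
    Finset.sum_le_sum fun j hj =>
      Nat.mul_le_mul_right _ (hX j (Finset.mem_Icc.1 hj).1 ω)
  omega

lemma hrruZ_nonneg (n : ℕ) (ω : Ω) : 0 ≤ hrruZ a b N X R n ω := by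
  unfold hrruZ; positivity

lemma hrruZ_le_one (ha : 1 ≤ a) (hX : ∀ j, 1 ≤ j → ∀ ω, X j ω ≤ N j ω) (n : ℕ) (ω : Ω) :
    hrruZ a b N X R n ω ≤ 1 := by
  unfold hrruZ
  rw [div_le_one (by exact_mod_cast hrruS_pos ha n ω)]
  exact_mod_cast hrruHa_le_hrruS hX n ω

end Bounds

lemma ratio_nonneg {Ω : Type*} (X N : ℕ → Ω → ℕ) (j : ℕ) (ω : Ω) :
    0 ≤ (X j ω : ℝ) / (N j ω : ℝ) := by positivity

lemma ratio_le_one {Ω : Type*} {X N : ℕ → Ω → ℕ} {j : ℕ} {ω : Ω}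
    (h1 : 1 ≤ N j ω) (h2 : X j ω ≤ N j ω) : (X j ω : ℝ) / (N j ω : ℝ) ≤ 1 := by
  rw [div_le_one (by exact_mod_cast h1)]
  exact_mod_cast h2

/-- The key conditional expectation identity: `E[Xₙ/Nₙ | 𝒢 (n-1)] = Z (n-1)`. -/
lemma condexp_ratio {Ω : Type*} [m0 : MeasurableSpace Ω] (μ : Measure Ω)
    [IsProbabilityMeasure μ] (a b : ℕ) (N X R : ℕ → Ω → ℕ) (h : IsHRRU μ a b N X R)
    {n : ℕ} (hn : 1 ≤ n) :
    μ[fun ω => (X n ω : ℝ) / (N n ω : ℝ)|hrruG N X R (n - 1)] =ᵐ[μ]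
      hrruZ a b N X R (n - 1) := by
  have hG_le : hrruG N X R (n-1) ≤ m0 := hrruG_le h.measN h.measX h.measR _
  set f : Ω → ℝ := fun ω => (X n ω : ℝ) / (N n ω : ℝ) with hf_def
  have hfmeas : Measurable f :=
    (measurable_from_top.comp (h.measX n)).div (measurable_from_top.comp (h.measN n))
  have hfbd : ∀ ω, ‖f ω‖ ≤ 1 := by
    intro ω
    rw [Real.norm_eq_abs, abs_of_nonneg (ratio_nonneg X N n ω)]
    exact ratio_le_one (h.rangeN n hn ω).1 (h.rangeX n hn ω)
  have hfint : Integrable f μ :=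
    ⟨hfmeas.aestronglyMeasurable, HasFiniteIntegral.of_bounded (ae_of_all _ hfbd)⟩
  have hgmeas : ∀ k : ℕ, Measurable (fun ω => if X n ω = k then (1:ℝ) else 0) := by
    intro k
    exact Measurable.ite (h.measX n (MeasurableSet.singleton k)) measurable_const
      measurable_const
  have hgint : ∀ k : ℕ, Integrable (fun ω => if X n ω = k then (1:ℝ) else 0) μ := by
    intro k
    refine ⟨(hgmeas k).aestronglyMeasurable, HasFiniteIntegral.of_bounded
      (C := 1) (ae_of_all _ fun ω => ?_)⟩
    by_cases hxk : X n ω = k <;> simp [hxk]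
  have key : ∀ m : ℕ, ∀ᵐ ω ∂μ, N n ω = m →
      (μ[f|hrruG N X R (n-1)]) ω = hrruZ a b N X R (n-1) ω := by
    intro m
    rcases Nat.eq_zero_or_pos m with rfl | hm
    · filter_upwards with ω h0
      have := (h.rangeN n hn ω).1
      omega
    set A : Set Ω := N n ⁻¹' {m} with hA_def
    have hn1 : n - 1 + 1 = n := Nat.succ_pred_eq_of_pos hn
    have hA : MeasurableSet[hrruG N X R (n-1)] A := by
      have hle : MeasurableSpace.comap (N n) ⊤ ≤ hrruG N X R (n-1) := by
        rw [hrruG, hn1]; exact le_sup_right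
      exact hle _ ⟨{m}, trivial, rfl⟩
    -- decompose the indicator of the ratio as a finite sum
    have hdecomp : A.indicator f = ∑ k ∈ Finset.range (m+1),
        ((k:ℝ)/m) • A.indicator (fun ω => if X n ω = k then (1:ℝ) else 0) := by
      funext ω
      rw [Finset.sum_apply]
      by_cases hω : ω ∈ A
      · have hNm : N n ω = m := hω
        rw [Set.indicator_of_mem hω]
        have hXm : X n ω ∈ Finset.range (m+1) := by
          rw [Finset.mem_range]
          have := h.rangeX n hn ω
          omega
        rw [Finset.sum_eq_single (X n ω)]
        · simp [Set.indicator_of_mem hω, hf_def, hNm]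
        · intro k _ hk
          simp [Set.indicator_of_mem hω, Ne.symm hk]
        · intro hmem
          exact absurd hXm hmem
      · rw [Set.indicator_of_notMem hω]
        symm
        refine Finset.sum_eq_zero fun k _ => ?_
        simp [Set.indicator_of_notMem hω]
    have e1 : A.indicator (μ[f|hrruG N X R (n-1)])
        =ᵐ[μ] μ[A.indicator f|hrruG N X R (n-1)] :=
      (condExp_indicator hfint hA).symm
    have e2 : μ[A.indicator f|hrruG N X R (n-1)] =ᵐ[μ]
        ∑ k ∈ Finset.range (m+1),
          μ[((k:ℝ)/m) • A.indicator (fun ω => if X n ω = k then (1:ℝ) else 0)|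
            hrruG N X R (n-1)] := by
      rw [hdecomp]
      refine condExp_finset_sum (fun k _ => ?_) _
      exact (Integrable.indicator (hgint k) (hG_le _ hA)).smul _
    have e3 : ∀ k, k ∈ Finset.range (m+1) →
        μ[((k:ℝ)/m) • A.indicator (fun ω => if X n ω = k then (1:ℝ) else 0)|
          hrruG N X R (n-1)] =ᵐ[μ]
        fun ω => ((k:ℝ)/m) * A.indicator (fun ω' => hypergeomPMF (N n ω')
          (hrruS a b N R (n-1) ω') (hrruHa a X R (n-1) ω') k) ω := by
      intro k _
      refine (condExp_smul ((k:ℝ)/m) _ _).trans ?_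
      have i1 : μ[A.indicator (fun ω => if X n ω = k then (1:ℝ) else 0)|hrruG N X R (n-1)]
          =ᵐ[μ] A.indicator (μ[fun ω => if X n ω = k then (1:ℝ) else 0|hrruG N X R (n-1)]) :=
        condExp_indicator (hgint k) hA
      have i2 := h.hypergeom n hn k
      filter_upwards [i1, i2] with ω hω1 hω2
      simp only [Pi.smul_apply, smul_eq_mul]
      rw [hω1]
      by_cases hωA : ω ∈ A
      · rw [Set.indicator_of_mem hωA, Set.indicator_of_mem hωA, hω2]
      · rw [Set.indicator_of_notMem hωA, Set.indicator_of_notMem hωA]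
    have e4 : ∀ᵐ ω ∂μ, ∀ k ∈ Finset.range (m+1),
        (μ[((k:ℝ)/m) • A.indicator (fun ω => if X n ω = k then (1:ℝ) else 0)|
          hrruG N X R (n-1)]) ω =
        ((k:ℝ)/m) * A.indicator (fun ω' => hypergeomPMF (N n ω')
          (hrruS a b N R (n-1) ω') (hrruHa a X R (n-1) ω') k) ω :=
      (eventually_all_finset _).2 fun k hk => e3 k hk
    filter_upwards [e1, e2, e4] with ω hω1 hω2 hω4 hNm
    have hωA : ω ∈ A := hNm
    have hSω : m ≤ hrruS a b N R (n-1) ω := hNm ▸ (h.rangeN n hn ω).2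
    have hHS : hrruHa a X R (n-1) ω ≤ hrruS a b N R (n-1) ω :=
      hrruHa_le_hrruS h.rangeX (n-1) ω
    have lhs_eq : (μ[f|hrruG N X R (n-1)]) ω =
        ∑ k ∈ Finset.range (m+1), ((k:ℝ)/m) *
          hypergeomPMF m (hrruS a b N R (n-1) ω) (hrruHa a X R (n-1) ω) k := by
      have := Set.indicator_of_mem hωA (μ[f|hrruG N X R (n-1)])
      rw [← this, hω1, hω2, Finset.sum_apply, Finset.sum_congr rfl hω4]
      refine Finset.sum_congr rfl fun k _ => ?_
      rw [Set.indicator_of_mem hωA, hNm]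
    rw [lhs_eq]
    have hmean := hyp_mean m (hrruS a b N R (n-1) ω) (hrruHa a X R (n-1) ω) hm hSω hHS
    have : ∑ k ∈ Finset.range (m+1), ((k:ℝ)/m) *
        hypergeomPMF m (hrruS a b N R (n-1) ω) (hrruHa a X R (n-1) ω) k
        = (1/m) * ∑ k ∈ Finset.range (m+1), (k:ℝ) *
          hypergeomPMF m (hrruS a b N R (n-1) ω) (hrruHa a X R (n-1) ω) k := by
      rw [Finset.mul_sum]
      exact Finset.sum_congr rfl fun k _ => by ring
    rw [this, hmean]
    have hm0 : (m:ℝ) ≠ 0 := Nat.cast_ne_zero.2 hm.ne'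
    have hSpos : 1 ≤ hrruS a b N R (n-1) ω := hrruS_pos h.ha (n-1) ω
    have hS0 : (hrruS a b N R (n-1) ω : ℝ) ≠ 0 := Nat.cast_ne_zero.2 (by omega)
    unfold hrruZ
    field_simp
  have := ae_all_iff.2 key
  filter_upwards [this] with ω hω
  exact hω (N n ω) rfl



/-- The martingale difference `Y j = X j/N j - Z (j-1)`. -/
def hrruY {Ω : Type*} (a b : ℕ) (N X R : ℕ → Ω → ℕ) (j : ℕ) (ω : Ω) : ℝ :=
  (X j ω : ℝ) / (N j ω : ℝ) - hrruZ a b N X R (j - 1) ω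

section Y
variable {Ω : Type*} [m0 : MeasurableSpace Ω] {μ : Measure Ω} [IsProbabilityMeasure μ]
  {a b : ℕ} {N X R : ℕ → Ω → ℕ}

lemma hrruY_measF (h : IsHRRU μ a b N X R) {j n : ℕ} (h1 : 1 ≤ j) (h2 : j ≤ n) :
    Measurable[hrruF N X R n] (hrruY a b N X R j) :=
  (measurable_ratio_F h1 h2).sub
    ((measurable_Z_F a b (j-1)).mono (hrruF_mono (by omega)) le_rfl)

lemma hrruY_meas (h : IsHRRU μ a b N X R) (j : ℕ) : Measurable (hrruY a b N X R j) :=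
  Measurable.sub
    ((measurable_from_top.comp (h.measX j)).div (measurable_from_top.comp (h.measN j)))
    (((measurable_H_real a (j-1)).mono (hrruF_le h.measN h.measX h.measR _) le_rfl).div
      ((measurable_S_real a b (j-1)).mono (hrruF_le h.measN h.measX h.measR _) le_rfl))

lemma hrruY_bound (h : IsHRRU μ a b N X R) {j : ℕ} (hj : 1 ≤ j) (ω : Ω) :
    |hrruY a b N X R j ω| ≤ 2 := by
  unfold hrruY
  have r1 := ratio_nonneg X N j ω
  have r2 := ratio_le_one (h.rangeN j hj ω).1 (h.rangeX j hj ω)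
  have z1 := hrruZ_nonneg (a := a) (b := b) (N := N) (X := X) (R := R) (j-1) ω
  have z2 := hrruZ_le_one (b := b) (N := N) (R := R) h.ha h.rangeX (j-1) ω
  rw [abs_le]
  constructor <;> linarith

lemma hrruY_int (h : IsHRRU μ a b N X R) {j : ℕ} (hj : 1 ≤ j) :
    Integrable (hrruY a b N X R j) μ :=
  ⟨(hrruY_meas h j).aestronglyMeasurable,
    HasFiniteIntegral.of_bounded (C := 2) (ae_of_all _ fun ω => hrruY_bound h hj ω)⟩

lemma condexp_hrruY (h : IsHRRU μ a b N X R) {j : ℕ} (hj : 1 ≤ j) :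
    μ[hrruY a b N X R j|hrruG N X R (j-1)] =ᵐ[μ] 0 := by
  have hG_le : hrruG N X R (j-1) ≤ m0 := hrruG_le h.measN h.measX h.measR _
  have hZmeas : StronglyMeasurable[hrruG N X R (j-1)] (hrruZ a b N X R (j-1)) :=
    ((measurable_Z_F a b (j-1)).mono (hrruF_le_hrruG (j-1)) le_rfl).stronglyMeasurable
  have hZint : Integrable (hrruZ a b N X R (j-1)) μ := by
    refine ⟨(hZmeas.mono hG_le).aestronglyMeasurable,
      HasFiniteIntegral.of_bounded (C := 1) (ae_of_all _ fun ω => ?_)⟩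
    rw [Real.norm_eq_abs, abs_of_nonneg (hrruZ_nonneg _ ω)]
    exact hrruZ_le_one h.ha h.rangeX _ ω
  have hratio_int : Integrable (fun ω => (X j ω : ℝ) / (N j ω : ℝ)) μ := by
    refine ⟨((measurable_from_top.comp (h.measX j)).div
      (measurable_from_top.comp (h.measN j))).aestronglyMeasurable,
      HasFiniteIntegral.of_bounded (C := 1) (ae_of_all _ fun ω => ?_)⟩
    rw [Real.norm_eq_abs, abs_of_nonneg (ratio_nonneg X N j ω)]
    exact ratio_le_one (h.rangeN j hj ω).1 (h.rangeX j hj ω)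
  have hsub := condExp_sub (m := hrruG N X R (j-1)) (μ := μ) hratio_int hZint
  have hZfix : μ[hrruZ a b N X R (j-1)|hrruG N X R (j-1)] =ᵐ[μ] hrruZ a b N X R (j-1) :=
    Filter.EventuallyEq.of_eq (condExp_of_stronglyMeasurable hG_le hZmeas hZint)
  have hratio := condexp_ratio μ a b N X R h hj
  have : hrruY a b N X R j = fun ω => (X j ω : ℝ) / (N j ω : ℝ) - hrruZ a b N X R (j-1) ω :=
    rfl
  rw [this]
  refine hsub.trans ?_
  filter_upwards [hZfix, hratio] with ω h1 h2
  simp only [Pi.sub_apply, Pi.zero_apply]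
  rw [h1, h2]
  simp

lemma hrruY_orth (h : IsHRRU μ a b N X R) {i j : ℕ} (hi : 1 ≤ i) (hij : i < j) :
    ∫ ω, hrruY a b N X R i ω * hrruY a b N X R j ω ∂μ = 0 := by
  have hj : 1 ≤ j := by omega
  have hG_le : hrruG N X R (j-1) ≤ m0 := hrruG_le h.measN h.measX h.measR _
  have hYi_sm : StronglyMeasurable[hrruG N X R (j-1)] (hrruY a b N X R i) :=
    ((hrruY_measF h hi (by omega : i ≤ j - 1)).mono (hrruF_le_hrruG (j-1)) le_rfl).stronglyMeasurable
  have hprod_int : Integrable (hrruY a b N X R i * hrruY a b N X R j) μ := by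
    refine ⟨((hrruY_meas h i).mul (hrruY_meas h j)).aestronglyMeasurable,
      HasFiniteIntegral.of_bounded (C := 4) (ae_of_all _ fun ω => ?_)⟩
    rw [Pi.mul_apply, Real.norm_eq_abs, abs_mul]
    have b1 := hrruY_bound h hi ω
    have b2 := hrruY_bound h hj ω
    nlinarith [abs_nonneg (hrruY a b N X R i ω), abs_nonneg (hrruY a b N X R j ω)]
  have hpull := condExp_mul_of_stronglyMeasurable_left hYi_sm hprod_int (hrruY_int h hj)
  have hzero := condexp_hrruY h hj
  have hae : μ[hrruY a b N X R i * hrruY a b N X R j|hrruG N X R (j-1)] =ᵐ[μ] 0 := by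
    refine hpull.trans ?_
    filter_upwards [hzero] with ω hω
    simp only [Pi.mul_apply, Pi.zero_apply] at *
    rw [hω, mul_zero]
  calc ∫ ω, hrruY a b N X R i ω * hrruY a b N X R j ω ∂μ
      = ∫ ω, (μ[hrruY a b N X R i * hrruY a b N X R j|hrruG N X R (j-1)]) ω ∂μ :=
        (integral_condExp hG_le).symm
    _ = ∫ ω, (0 : Ω → ℝ) ω ∂μ := integral_congr_ae hae
    _ = 0 := by simp

lemma hrruY_sq_int (h : IsHRRU μ a b N X R) {i j : ℕ} (hi : 1 ≤ i) (hj : 1 ≤ j) :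
    Integrable (fun ω => hrruY a b N X R i ω * hrruY a b N X R j ω) μ := by
  refine ⟨((hrruY_meas h i).mul (hrruY_meas h j)).aestronglyMeasurable,
    HasFiniteIntegral.of_bounded (C := 4) (ae_of_all _ fun ω => ?_)⟩
  rw [Real.norm_eq_abs, abs_mul]
  have b1 := hrruY_bound h hi ω
  have b2 := hrruY_bound h hj ω
  nlinarith [abs_nonneg (hrruY a b N X R i ω), abs_nonneg (hrruY a b N X R j ω)]

lemma hrruY_sum_sq (h : IsHRRU μ a b N X R) (n : ℕ) :
    ∫ ω, (∑ j ∈ Finset.Icc 1 n, hrruY a b N X R j ω)^2 ∂μ ≤ 4 * n := by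
  have expand : ∀ ω, (∑ j ∈ Finset.Icc 1 n, hrruY a b N X R j ω)^2
      = ∑ i ∈ Finset.Icc 1 n, ∑ j ∈ Finset.Icc 1 n,
          hrruY a b N X R i ω * hrruY a b N X R j ω := by
    intro ω
    rw [sq, Finset.sum_mul_sum]
  have hint : ∀ i ∈ Finset.Icc 1 n, Integrable
      (fun ω => ∑ j ∈ Finset.Icc 1 n, hrruY a b N X R i ω * hrruY a b N X R j ω) μ := by
    intro i hi
    exact integrable_finset_sum _ fun j hj =>
      hrruY_sq_int h (Finset.mem_Icc.1 hi).1 (Finset.mem_Icc.1 hj).1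
  calc ∫ ω, (∑ j ∈ Finset.Icc 1 n, hrruY a b N X R j ω)^2 ∂μ
      = ∑ i ∈ Finset.Icc 1 n, ∫ ω, ∑ j ∈ Finset.Icc 1 n,
          hrruY a b N X R i ω * hrruY a b N X R j ω ∂μ := by
        have heq : (fun ω => (∑ j ∈ Finset.Icc 1 n, hrruY a b N X R j ω)^2)
            = fun ω => ∑ i ∈ Finset.Icc 1 n, ∑ j ∈ Finset.Icc 1 n,
                hrruY a b N X R i ω * hrruY a b N X R j ω := funext expand
        rw [heq]
        exact integral_finset_sum _ hint
    _ = ∑ i ∈ Finset.Icc 1 n, ∑ j ∈ Finset.Icc 1 n,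
          ∫ ω, hrruY a b N X R i ω * hrruY a b N X R j ω ∂μ := by
        refine Finset.sum_congr rfl fun i hi => ?_
        exact integral_finset_sum _ fun j hj =>
          hrruY_sq_int h (Finset.mem_Icc.1 hi).1 (Finset.mem_Icc.1 hj).1
    _ ≤ ∑ i ∈ Finset.Icc 1 n, (4 : ℝ) := by
        refine Finset.sum_le_sum fun i hi => ?_
        have hi1 := (Finset.mem_Icc.1 hi).1
        rw [Finset.sum_eq_single_of_mem i hi]
        · have hb : ∀ ω, hrruY a b N X R i ω * hrruY a b N X R i ω ≤ 4 := by
            intro ω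
            have := hrruY_bound h hi1 ω
            nlinarith [abs_nonneg (hrruY a b N X R i ω), le_abs_self (hrruY a b N X R i ω),
              neg_abs_le (hrruY a b N X R i ω)]
          calc ∫ ω, hrruY a b N X R i ω * hrruY a b N X R i ω ∂μ
              ≤ ∫ _, (4:ℝ) ∂μ :=
                integral_mono (hrruY_sq_int h hi1 hi1) (integrable_const 4) hb
            _ = 4 := by simp
        · intro j hj hji
          have hj1 := (Finset.mem_Icc.1 hj).1
          rcases lt_or_gt_of_ne hji with hlt | hgt
          · rw [show (fun ω => hrruY a b N X R i ω * hrruY a b N X R j ω)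
              = fun ω => hrruY a b N X R j ω * hrruY a b N X R i ω from
                funext fun ω => mul_comm _ _]
            exact hrruY_orth h hj1 hlt
          · exact hrruY_orth h hi1 hgt
    _ = 4 * n := by
        rw [Finset.sum_const, Nat.card_Icc]
        simp [mul_comm]

end Y

lemma tendsto_nat_sqrt_atTop : Tendsto Nat.sqrt atTop atTop :=
  tendsto_atTop_atTop.2 fun k => ⟨k*k, fun _ hn => Nat.le_sqrt.2 hn⟩

lemma avg_tendsto_zero_of_squares (u : ℕ → ℝ) (hb : ∀ j, 1 ≤ j → |u j| ≤ 2)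
    (h : Tendsto (fun m : ℕ => (∑ j ∈ Finset.Icc 1 (m*m), u j) / ((m*m : ℕ) : ℝ))
      atTop (𝓝 0)) :
    Tendsto (fun n : ℕ => (∑ j ∈ Finset.Icc 1 n, u j) / (n : ℝ)) atTop (𝓝 0) := by
  set T : ℕ → ℝ := fun n => ∑ j ∈ Finset.Icc 1 n, u j with hT
  set v : ℕ → ℝ := fun m => T (m*m) / ((m*m : ℕ) : ℝ) with hv
  have hIoc : ∀ k : ℕ, T k = ∑ j ∈ Finset.Ioc 0 k, u j := by
    intro k; rw [hT, ← Finset.Icc_add_one_left_eq_Ioc]; rfl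
  refine squeeze_zero_norm' (f := fun n => T n / (n:ℝ))
    (a := fun n => |v (Nat.sqrt n)| + 4 / (Nat.sqrt n : ℝ)) ?_ ?_
  · filter_upwards [eventually_ge_atTop 1] with n hn
    set m := Nat.sqrt n with hm
    have hm1 : 1 ≤ m := Nat.le_sqrt.2 (by omega)
    have hmn : m * m ≤ n := Nat.sqrt_le n
    have hn2 : n < (m+1) * (m+1) := Nat.lt_succ_sqrt n
    have hn0 : (0:ℝ) < n := by exact_mod_cast hn
    have hm0 : (0:ℝ) < m := by exact_mod_cast hm1
    have hmm0 : (0:ℝ) < ((m*m:ℕ):ℝ) := by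
      have : 1 ≤ m*m := Nat.one_le_iff_ne_zero.2 (by positivity)
      exact_mod_cast this
    have hsplit : T n = T (m*m) + ∑ j ∈ Finset.Ioc (m*m) n, u j := by
      rw [hIoc, hIoc, Finset.sum_Ioc_consecutive u (Nat.zero_le (m*m)) hmn]
    have htail : |∑ j ∈ Finset.Ioc (m*m) n, u j| ≤ 4 * (m:ℝ) := by
      calc |∑ j ∈ Finset.Ioc (m*m) n, u j| ≤ ∑ j ∈ Finset.Ioc (m*m) n, |u j| :=
            Finset.abs_sum_le_sum_abs _ _
        _ ≤ ∑ _j ∈ Finset.Ioc (m*m) n, (2:ℝ) := by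
            refine Finset.sum_le_sum fun j hj => hb j ?_
            have := (Finset.mem_Ioc.1 hj).1
            omega
        _ = 2 * ((n - m*m : ℕ) : ℝ) := by
            rw [Finset.sum_const, Nat.card_Ioc]; push_cast; ring
        _ ≤ 4 * (m:ℝ) := by
            have hexp : (m+1)*(m+1) = m*m + 2*m + 1 := by ring
            have : (n - m*m : ℕ) ≤ 2*m := by omega
            have h2 : ((n - m*m : ℕ) : ℝ) ≤ ((2*m : ℕ) : ℝ) := by exact_mod_cast this
            push_cast at h2
            linarith
    have habs : |T n| ≤ |T (m*m)| + 4 * (m:ℝ) := by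
      rw [hsplit]
      calc |T (m*m) + ∑ j ∈ Finset.Ioc (m*m) n, u j|
          ≤ |T (m*m)| + |∑ j ∈ Finset.Ioc (m*m) n, u j| := abs_add_le _ _
        _ ≤ |T (m*m)| + 4 * (m:ℝ) := by linarith
    have hmmn : ((m*m:ℕ):ℝ) ≤ (n:ℝ) := by exact_mod_cast hmn
    have hcast : ((m*m:ℕ):ℝ) = (m:ℝ) * m := by push_cast; ring
    calc ‖T n / (n:ℝ)‖ = |T n| / (n:ℝ) := by
          rw [Real.norm_eq_abs, abs_div, abs_of_pos hn0]
      _ ≤ (|T (m*m)| + 4 * (m:ℝ)) / (n:ℝ) := by gcongr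
      _ = |T (m*m)| / (n:ℝ) + 4 * (m:ℝ) / (n:ℝ) := add_div _ _ _
      _ ≤ |T (m*m)| / ((m*m:ℕ):ℝ) + 4 * (m:ℝ) / ((m*m:ℕ):ℝ) :=
          add_le_add (div_le_div_of_nonneg_left (abs_nonneg _) hmm0 hmmn)
            (div_le_div_of_nonneg_left (by positivity) hmm0 hmmn)
      _ = |v m| + 4 / (m:ℝ) := by
          rw [hv]
          simp only []
          rw [abs_div, abs_of_pos hmm0, hcast]
          congr 1
          field_simp
  · have h1 : Tendsto (fun n => |v (Nat.sqrt n)|) atTop (𝓝 0) := by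
      have := (h.comp tendsto_nat_sqrt_atTop).abs
      simpa [hv, hT] using this
    have h2 : Tendsto (fun n => 4 / (Nat.sqrt n : ℝ)) atTop (𝓝 0) :=
      (tendsto_const_div_atTop_nhds_zero_nat 4).comp tendsto_nat_sqrt_atTop
    simpa using h1.add h2


/-- in the HRRU model, the empirical means
`M n = (1/n) ∑_{j=1}^n X j / N j` converge almost surely and in `L¹` to the same
random variable `Z` which is the almost sure limit of the proportions `Z n`. -/
theorem stmt5
    {Ω : Type*} [m0 : MeasurableSpace Ω] (μ : Measure Ω) [IsProbabilityMeasure μ]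
    (a b : ℕ) (N X R : ℕ → Ω → ℕ) (h : IsHRRU μ a b N X R)
    (Zlim : Ω → ℝ)
    (hZ : ∀ᵐ ω ∂μ, Tendsto (fun n => hrruZ a b N X R n ω) atTop (𝓝 (Zlim ω))) :
    (∀ᵐ ω ∂μ, Tendsto
        (fun n : ℕ => (n : ℝ)⁻¹ * ∑ j ∈ Finset.Icc 1 n, (X j ω : ℝ) / (N j ω : ℝ))
        atTop (𝓝 (Zlim ω))) ∧
      Tendsto (fun n : ℕ => ∫ ω,
          |(n : ℝ)⁻¹ * ∑ j ∈ Finset.Icc 1 n, (X j ω : ℝ) / (N j ω : ℝ) - Zlim ω| ∂μ)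
        atTop (𝓝 0) := by

  classical
  set T : ℕ → Ω → ℝ := fun n ω => ∑ j ∈ Finset.Icc 1 n, hrruY a b N X R j ω with hT
  have hTmeas : ∀ n, Measurable (T n) := fun n =>
    Finset.measurable_sum _ fun j _ => hrruY_meas h j
  set v : ℕ → Ω → ℝ := fun m ω => T (m*m) ω / ((m*m : ℕ) : ℝ) with hv
  have hvmeas : ∀ m, Measurable (v m) := fun m => (hTmeas _).div_const _
  have hTbd : ∀ n ω, |T n ω| ≤ 2 * n := by
    intro n ω
    calc |T n ω| ≤ ∑ j ∈ Finset.Icc 1 n, |hrruY a b N X R j ω| :=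
          Finset.abs_sum_le_sum_abs _ _
      _ ≤ ∑ _j ∈ Finset.Icc 1 n, (2:ℝ) :=
          Finset.sum_le_sum fun j hj => hrruY_bound h (Finset.mem_Icc.1 hj).1 ω
      _ = 2 * n := by rw [Finset.sum_const, Nat.card_Icc]; push_cast; ring
  have hvbd : ∀ m ω, (v m ω)^2 ≤ 4 := by
    intro m ω
    rcases Nat.eq_zero_or_pos m with rfl | hm
    · simp [hv]
    · have hc : (0:ℝ) < ((m*m:ℕ):ℝ) := by
        have : 1 ≤ m*m := Nat.one_le_iff_ne_zero.2 (by positivity)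
        exact_mod_cast this
      have h1 : |v m ω| ≤ 2 := by
        rw [hv]
        simp only []
        rw [abs_div, abs_of_pos hc, div_le_iff₀ hc]
        have := hTbd (m*m) ω
        push_cast
        push_cast at this
        linarith
      nlinarith [le_abs_self (v m ω), neg_abs_le (v m ω), h1]
  have hvint : ∀ m, Integrable (fun ω => (v m ω)^2) μ := fun m =>
    ⟨((hvmeas m).pow_const 2).aestronglyMeasurable,
      HasFiniteIntegral.of_bounded (C := 4) (ae_of_all _ fun ω => by
        rw [Real.norm_eq_abs, abs_of_nonneg (sq_nonneg _)]; exact hvbd m ω)⟩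
  have hvL2 : ∀ m : ℕ, ∫ ω, (v m ω)^2 ∂μ ≤ 4 / ((m*m:ℕ):ℝ) := by
    intro m
    rcases Nat.eq_zero_or_pos m with rfl | hm
    · simp [hv]
    · have hc : (0:ℝ) < ((m*m:ℕ):ℝ) := by
        have : 1 ≤ m*m := Nat.one_le_iff_ne_zero.2 (by positivity)
        exact_mod_cast this
      have heq : (fun ω => (v m ω)^2) = fun ω => (T (m*m) ω)^2 * ((((m*m:ℕ):ℝ))^2)⁻¹ := by
        funext ω; rw [hv]; simp only []; rw [div_pow]; rw [div_eq_mul_inv]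
      rw [heq, integral_mul_const]
      have hsq := hrruY_sum_sq h (m*m)
      calc (∫ ω, (T (m*m) ω)^2 ∂μ) * ((((m*m:ℕ):ℝ))^2)⁻¹
          ≤ (4 * ((m*m:ℕ):ℝ)) * ((((m*m:ℕ):ℝ))^2)⁻¹ := by
            refine mul_le_mul_of_nonneg_right ?_ (by positivity)
            exact_mod_cast hsq
        _ = 4 / ((m*m:ℕ):ℝ) := by field_simp
  have hv0 : ∀ᵐ ω ∂μ, Tendsto (fun m => v m ω) atTop (𝓝 0) := by
    have hF : ∀ m : ℕ, ∫⁻ ω, ENNReal.ofReal ((v m ω)^2) ∂μ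
        ≤ ENNReal.ofReal (4 / ((m*m:ℕ):ℝ)) := by
      intro m
      rw [← ofReal_integral_eq_lintegral_ofReal (hvint m)
        (ae_of_all _ fun ω => sq_nonneg _)]
      exact ENNReal.ofReal_le_ofReal (hvL2 m)
    have hsummable : Summable (fun m : ℕ => 4 / ((m*m:ℕ):ℝ)) := by
      have heq : (fun m : ℕ => 4 / ((m*m:ℕ):ℝ)) = fun m : ℕ => 4 * (1 / (m:ℝ)^2) := by
        funext m
        push_cast
        rw [mul_one_div, pow_two]
      rw [heq]
      exact (Real.summable_one_div_nat_pow.2 one_lt_two).mul_left 4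
    have htsum : ∑' m, ∫⁻ ω, ENNReal.ofReal ((v m ω)^2) ∂μ ≠ ⊤ := by
      refine ne_top_of_le_ne_top ?_ (ENNReal.tsum_le_tsum hF)
      rw [← ENNReal.ofReal_tsum_of_nonneg (fun m => by positivity) hsummable]
      exact ENNReal.ofReal_ne_top
    have hlint : ∫⁻ ω, ∑' m, ENNReal.ofReal ((v m ω)^2) ∂μ ≠ ⊤ := by
      rw [lintegral_tsum (fun m =>
        ((hvmeas m).pow_const 2).ennreal_ofReal.aemeasurable)]
      exact htsum
    have hae := ae_lt_top' (AEMeasurable.ennreal_tsum fun m =>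
      ((hvmeas m).pow_const 2).ennreal_ofReal.aemeasurable) hlint
    filter_upwards [hae] with ω hω
    have hsum0 : Tendsto (fun m => ENNReal.ofReal ((v m ω)^2)) atTop (𝓝 0) :=
      ENNReal.tendsto_atTop_zero_of_tsum_ne_top hω.ne
    have hsq : Tendsto (fun m => (v m ω)^2) atTop (𝓝 0) := by
      have h2 := (ENNReal.tendsto_toReal ENNReal.zero_ne_top).comp hsum0
      rw [ENNReal.toReal_zero] at h2
      refine h2.congr fun m => ?_
      simp only [Function.comp_apply]
      exact ENNReal.toReal_ofReal (sq_nonneg _)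
    have hsqrt : Tendsto (fun m => Real.sqrt ((v m ω)^2)) atTop (𝓝 0) := by
      have := (Real.continuous_sqrt.tendsto 0).comp hsq
      rwa [Real.sqrt_zero] at this
    have habs : ∀ m, ‖v m ω‖ = Real.sqrt ((v m ω)^2) := fun m => by
      rw [Real.norm_eq_abs, Real.sqrt_sq_eq_abs]
    exact squeeze_zero_norm (fun m => (habs m).le) hsqrt
  have hT0 : ∀ᵐ ω ∂μ, Tendsto (fun n => T n ω / (n:ℝ)) atTop (𝓝 0) := by
    filter_upwards [hv0] with ω hω
    exact avg_tendsto_zero_of_squares (fun j => hrruY a b N X R j ω)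
      (fun j hj => hrruY_bound h hj ω) hω
  have hces : ∀ᵐ ω ∂μ, Tendsto (fun n : ℕ => (n:ℝ)⁻¹ * ∑ j ∈ Finset.Icc 1 n,
      hrruZ a b N X R (j-1) ω) atTop (𝓝 (Zlim ω)) := by
    filter_upwards [hZ] with ω hω
    have hre : ∀ n : ℕ, ∑ j ∈ Finset.Icc 1 n, hrruZ a b N X R (j-1) ω
        = ∑ i ∈ Finset.range n, hrruZ a b N X R i ω := by
      intro n
      rw [← Finset.Ico_add_one_right_eq_Icc, Finset.sum_Ico_eq_sum_range]
      simp
    have := hω.cesaro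
    refine this.congr fun n => ?_
    rw [hre]
  have hae_main : ∀ᵐ ω ∂μ, Tendsto
      (fun n : ℕ => (n : ℝ)⁻¹ * ∑ j ∈ Finset.Icc 1 n, (X j ω : ℝ) / (N j ω : ℝ))
      atTop (𝓝 (Zlim ω)) := by
    filter_upwards [hT0, hces] with ω h1 h2
    have hdecomp : ∀ n : ℕ, (n:ℝ)⁻¹ * ∑ j ∈ Finset.Icc 1 n, (X j ω:ℝ)/(N j ω:ℝ)
        = T n ω / (n:ℝ) + (n:ℝ)⁻¹ * ∑ j ∈ Finset.Icc 1 n, hrruZ a b N X R (j-1) ω := by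
      intro n
      have hsum : ∑ j ∈ Finset.Icc 1 n, (X j ω:ℝ)/(N j ω:ℝ)
          = T n ω + ∑ j ∈ Finset.Icc 1 n, hrruZ a b N X R (j-1) ω := by
        rw [hT]
        simp only []
        rw [← Finset.sum_add_distrib]
        refine Finset.sum_congr rfl fun j _ => ?_
        unfold hrruY
        ring
      rw [hsum, mul_add, div_eq_inv_mul]
    have hfinal := h1.add h2
    rw [zero_add] at hfinal
    exact hfinal.congr fun n => (hdecomp n).symm
  refine ⟨hae_main, ?_⟩
  have hZlim_meas : AEMeasurable Zlim μ :=
    aemeasurable_of_tendsto_metrizable_ae atTop (fun n =>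
      ((measurable_Z_F a b n).mono (hrruF_le h.measN h.measX h.measR n)
        le_rfl).aemeasurable) hZ
  have hMmeas : ∀ n : ℕ, Measurable
      (fun ω => (n:ℝ)⁻¹ * ∑ j ∈ Finset.Icc 1 n, (X j ω:ℝ)/(N j ω:ℝ)) := fun n =>
    (Finset.measurable_sum _ fun j _ =>
      (measurable_from_top.comp (h.measX j)).div
        (measurable_from_top.comp (h.measN j))).const_mul _
  have hM01 : ∀ n : ℕ, ∀ ω,
      0 ≤ (n:ℝ)⁻¹ * ∑ j ∈ Finset.Icc 1 n, (X j ω:ℝ)/(N j ω:ℝ) ∧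
      (n:ℝ)⁻¹ * ∑ j ∈ Finset.Icc 1 n, (X j ω:ℝ)/(N j ω:ℝ) ≤ 1 := by
    intro n ω
    rcases Nat.eq_zero_or_pos n with rfl | hn
    · simp
    constructor
    · have : 0 ≤ ∑ j ∈ Finset.Icc 1 n, (X j ω:ℝ)/(N j ω:ℝ) :=
        Finset.sum_nonneg fun j _ => ratio_nonneg X N j ω
      positivity
    · have hsum_le : ∑ j ∈ Finset.Icc 1 n, (X j ω:ℝ)/(N j ω:ℝ) ≤ n := by
        calc ∑ j ∈ Finset.Icc 1 n, (X j ω:ℝ)/(N j ω:ℝ)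
            ≤ ∑ _j ∈ Finset.Icc 1 n, (1:ℝ) := Finset.sum_le_sum fun j hj =>
              ratio_le_one (h.rangeN j (Finset.mem_Icc.1 hj).1 ω).1
                (h.rangeX j (Finset.mem_Icc.1 hj).1 ω)
          _ = n := by rw [Finset.sum_const, Nat.card_Icc]; push_cast; ring
      have hn0 : (0:ℝ) < n := by exact_mod_cast hn
      calc (n:ℝ)⁻¹ * ∑ j ∈ Finset.Icc 1 n, (X j ω:ℝ)/(N j ω:ℝ)
          ≤ (n:ℝ)⁻¹ * n := by
            refine mul_le_mul_of_nonneg_left hsum_le (by positivity)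
        _ = 1 := inv_mul_cancel₀ hn0.ne'
  have hZlim01 : ∀ᵐ ω ∂μ, |Zlim ω| ≤ 1 := by
    filter_upwards [hZ] with ω hω
    have hle : Zlim ω ≤ 1 := le_of_tendsto' hω fun n => hrruZ_le_one h.ha h.rangeX n ω
    have hge : 0 ≤ Zlim ω := ge_of_tendsto' hω fun n =>
      hrruZ_nonneg (a := a) (b := b) (N := N) (X := X) (R := R) n ω
    rw [abs_le]
    constructor <;> linarith
  have hconv := tendsto_integral_of_dominated_convergence
    (F := fun (n : ℕ) ω => |(n:ℝ)⁻¹ * ∑ j ∈ Finset.Icc 1 n, (X j ω:ℝ)/(N j ω:ℝ) - Zlim ω|)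
    (f := fun _ => (0:ℝ)) (bound := fun _ => (2:ℝ))
    (fun n => continuous_abs.comp_aestronglyMeasurable
      ((hMmeas n).aemeasurable.sub hZlim_meas).aestronglyMeasurable)
    (integrable_const 2)
    (fun n => by
      filter_upwards [hZlim01] with ω hω
      rw [Real.norm_eq_abs, abs_abs]
      have hM := hM01 n ω
      rw [abs_le] at hω ⊢
      constructor <;> linarith [hM.1, hM.2])
    (by
      filter_upwards [hae_main] with ω hω
      have := (hω.sub_const (Zlim ω)).abs
      rw [sub_self, abs_zero] at this
      exact this)
  simpa using hconv
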